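/- Let y : ℤ → ℝ be a sequence of positive reals satisfying the q-Painlevé I recurrence y_{n+4} y_n (1/y_{n+2} + 1)^2 = (y_{n+3} + 1)(y_{n+1} + 1) for all n ∈ ℤ. Then the quantity u_n := y_{n+3} (1/y_{n+1} + 1) / (y_n (1/y_{n+2} + 1)) is a conserved quantity, i.e., u_{n+1} = u_n for all n ∈ ℤ. -/

import Mathlib

/-- For positive solutions of the q-Painlevé I recurrence,
`u n := y (n+3) * (1/y (n+1) + 1) / (y n * (1/y (n+2) + 1))` is conserved. -/
theorem qPI_conserved_u
    (y : ℤ → ℝ) (hy : ∀ n : ℤ, 0 < y n)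
    (hrec : ∀ n : ℤ,
      y (n + 4) * y n * (1 / y (n + 2) + 1) ^ 2 = (y (n + 3) + 1) * (y (n + 1) + 1)) :
    ∀ n : ℤ,
      y (n + 1 + 3) * (1 / y (n + 1 + 1) + 1) / (y (n + 1) * (1 / y (n + 1 + 2) + 1)) =
        y (n + 3) * (1 / y (n + 1) + 1) / (y n * (1 / y (n + 2) + 1)) := by
  intro n
  have e1 : n + 1 + 3 = n + 4 := by ring
  have e2 : n + 1 + 1 = n + 2 := by ring
  have e3 : n + 1 + 2 = n + 3 := by ring
  rw [e1, e2, e3]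
  have h := hrec n
  have h0 := (hy n).ne'
  have h1 := (hy (n + 1)).ne'
  have h2 := (hy (n + 2)).ne'
  have h3 := (hy (n + 3)).ne'
  have h4 := (hy (n + 4)).ne'
  have p1 : (1 : ℝ) + y (n + 1) ≠ 0 := by nlinarith [hy (n+1)]
  have p2 : (1 : ℝ) + y (n + 2) ≠ 0 := by nlinarith [hy (n+2)]
  have p3 : (1 : ℝ) + y (n + 3) ≠ 0 := by nlinarith [hy (n+3)]
  field_simp at h ⊢
  linear_combination h
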